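/- Let d ≥ 1 and let L ≥ 1 be an integer. Let v_1, …, v_{L} ∈ [0,1]^d and w_1, …, w_{L} ∈ [0,1]^d, and define two sequences by x_1 = y_1 = 0, x_{k+1} = x_k + (1/L)·v_k ⊙ (1 − x_k), and y_{k+1} = y_k + (1/L)·w_k ⊙ (1 − y_k), for k = 1, …, L. Then for every k ∈ {1, …, L+1}: ‖x_k − y_k‖ ≤ (2/L)·Σ_{τ=1}^{k−1} ‖v_τ − w_τ‖, where ‖·‖ is the Euclidean norm. -/

import Mathlib

open MeasureTheory Finset

noncomputable section

/-- The unit cube `[0,1]^d` in `ℝ^d` (with Euclidean structure). -/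
def cube (d : ℕ) : Set (EuclideanSpace ℝ (Fin d)) :=
  {x | ∀ i, x i ∈ Set.Icc (0 : ℝ) 1}

/-- Coordinatewise (Hadamard) product on `ℝ^d`. -/
def had {d : ℕ} (x y : EuclideanSpace ℝ (Fin d)) : EuclideanSpace ℝ (Fin d) :=
  WithLp.toLp 2 (fun i => x i * y i)

/-- The all-ones vector in `ℝ^d`. -/
def onesV (d : ℕ) : EuclideanSpace ℝ (Fin d) := WithLp.toLp 2 (fun _ => 1)

/-- `K ⊆ ℝ^d` is downward closed (relative to the nonnegative orthant): together with any
`y ∈ K` it contains every `x` with `0 ≤ x ≤ y` coordinatewise. -/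
def DownwardClosed (d : ℕ) (K : Set (EuclideanSpace ℝ (Fin d))) : Prop :=
  ∀ y ∈ K, ∀ x : EuclideanSpace ℝ (Fin d), (∀ i, 0 ≤ x i) → (∀ i, x i ≤ y i) → x ∈ K

/-- `f` is continuous DR-submodular on the unit cube `[0,1]^d`. -/
def DRSubmodularOn (d : ℕ) (f : EuclideanSpace ℝ (Fin d) → ℝ) : Prop :=
  ∀ x y : EuclideanSpace ℝ (Fin d), x ∈ cube d → y ∈ cube d → (∀ i, x i ≤ y i) →
    ∀ (j : Fin d) (z : ℝ), 0 ≤ z →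
      x + z • EuclideanSpace.single j (1 : ℝ) ∈ cube d →
      y + z • EuclideanSpace.single j (1 : ℝ) ∈ cube d →
      f (y + z • EuclideanSpace.single j (1 : ℝ)) - f y ≤
        f (x + z • EuclideanSpace.single j (1 : ℝ)) - f x

/-- consensus-error propagation through the local Frank–Wolfe
iterations: two iterate sequences driven by update directions `v` and `w` satisfy
`‖x_k - y_k‖ ≤ (2/L) Σ_{τ=1}^{k-1} ‖v_τ - w_τ‖`. -/
lemma norm_le_of_abs_le {d : ℕ} (a b : EuclideanSpace ℝ (Fin d))
    (h : ∀ i, |a i| ≤ |b i|) : ‖a‖ ≤ ‖b‖ := by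
  rw [EuclideanSpace.norm_eq, EuclideanSpace.norm_eq]
  apply Real.sqrt_le_sqrt
  apply Finset.sum_le_sum
  intro i _
  have := h i
  simp only [Real.norm_eq_abs]
  nlinarith [abs_nonneg (a i), abs_nonneg (b i)]

lemma cube_invariant {d L : ℕ} (hL : 1 ≤ L)
    (v x : ℕ → EuclideanSpace ℝ (Fin d))
    (hv : ∀ k, 1 ≤ k → k ≤ L → v k ∈ cube d)
    (hx1 : x 1 = 0)
    (hxrec : ∀ k, 1 ≤ k → k ≤ L →
      x (k + 1) = x k + (L : ℝ)⁻¹ • had (v k) (onesV d - x k)) :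
    ∀ k, 1 ≤ k → k ≤ L + 1 → x k ∈ cube d := by
  have hLpos : (0:ℝ) < L := by exact_mod_cast hL
  have hLinv0 : (0:ℝ) ≤ (L:ℝ)⁻¹ := by positivity
  have hLinv1 : (L:ℝ)⁻¹ ≤ 1 := by
    rw [inv_le_one_iff₀]; right; exact_mod_cast hL
  intro k
  induction k with
  | zero => intro h; omega
  | succ n ih =>
    intro _ hn1
    rcases Nat.eq_zero_or_pos n with hn | hn
    · subst hn
      rw [hx1]
      intro i
      simp [Set.mem_Icc]
    · have hnL : n ≤ L := by omega
      have hxn := ih hn (by omega)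
      rw [hxrec n hn hnL]
      intro i
      have h1 := hxn i
      have h2 := hv n hn hnL i
      simp only [Set.mem_Icc] at h1 h2 ⊢
      simp only [PiLp.add_apply, PiLp.smul_apply, PiLp.sub_apply, had, onesV, smul_eq_mul, PiLp.toLp_apply]
      obtain ⟨h1a, h1b⟩ := h1
      obtain ⟨h2a, h2b⟩ := h2
      constructor
      · nlinarith [mul_nonneg h2a (by linarith : (0:ℝ) ≤ 1 - x n i),
          mul_nonneg hLinv0 (mul_nonneg h2a (by linarith : (0:ℝ) ≤ 1 - x n i))]
      · nlinarith [mul_nonneg (by nlinarith : (0:ℝ) ≤ 1 - (L:ℝ)⁻¹ * v n i)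
          (by linarith : (0:ℝ) ≤ 1 - x n i)]


set_option maxHeartbeats 2000000 in
theorem frank_wolfe_iterates_stability
    (d : ℕ) (hd : 1 ≤ d)
    (L : ℕ) (hL : 1 ≤ L)
    (v w : ℕ → EuclideanSpace ℝ (Fin d))
    (hv : ∀ k, 1 ≤ k → k ≤ L → v k ∈ cube d)
    (hw : ∀ k, 1 ≤ k → k ≤ L → w k ∈ cube d)
    (x y : ℕ → EuclideanSpace ℝ (Fin d))
    (hx1 : x 1 = 0) (hy1 : y 1 = 0)
    (hxrec : ∀ k, 1 ≤ k → k ≤ L →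
      x (k + 1) = x k + (L : ℝ)⁻¹ • had (v k) (onesV d - x k))
    (hyrec : ∀ k, 1 ≤ k → k ≤ L →
      y (k + 1) = y k + (L : ℝ)⁻¹ • had (w k) (onesV d - y k)) :
    ∀ k, 1 ≤ k → k ≤ L + 1 →
      ‖x k - y k‖ ≤ (2 / (L : ℝ)) * ∑ τ ∈ Finset.Icc 1 (k - 1), ‖v τ - w τ‖ := by
  have hLpos : (0:ℝ) < L := by exact_mod_cast hL
  have hLinv0 : (0:ℝ) ≤ (L:ℝ)⁻¹ := by positivity
  have hLinv1 : (L:ℝ)⁻¹ ≤ 1 := by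
    rw [inv_le_one_iff₀]; right; exact_mod_cast hL
  have hcx := cube_invariant hL v x hv hx1 hxrec
  have hcy := cube_invariant hL w y hw hy1 hyrec
  intro k
  induction k with
  | zero => intro h; omega
  | succ n ih =>
    intro _ hn1
    rcases Nat.eq_zero_or_pos n with hn | hn
    · subst hn
      simp [hx1, hy1]
    · have hnL : n ≤ L := by omega
      have IH := ih hn (by omega)
      -- decomposition: x(n+1) - y(n+1) = A + B
      set A : EuclideanSpace ℝ (Fin d) :=
        WithLp.toLp 2 (fun i => (1 - (L:ℝ)⁻¹ * v n i) * (x n i - y n i)) with hA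
      set B : EuclideanSpace ℝ (Fin d) :=
        WithLp.toLp 2 (fun i => (L:ℝ)⁻¹ * ((v n i - w n i) * (1 - y n i))) with hB
      have hdecomp : x (n+1) - y (n+1) = A + B := by
        rw [hxrec n hn hnL, hyrec n hn hnL]
        ext i
        simp only [PiLp.add_apply, PiLp.sub_apply, PiLp.smul_apply, had, onesV,
          smul_eq_mul, hA, hB, PiLp.toLp_apply]
        ring
      have hAle : ‖A‖ ≤ ‖x n - y n‖ := by
        apply norm_le_of_abs_le
        intro i
        have h2 := hv n hn hnL i
        simp only [Set.mem_Icc] at h2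
        simp only [hA, PiLp.sub_apply, abs_mul, PiLp.toLp_apply]
        have hfac : |1 - (L:ℝ)⁻¹ * v n i| ≤ 1 := by
          rw [abs_le]; constructor <;> nlinarith
        nlinarith [abs_nonneg (x n i - y n i), abs_nonneg (1 - (L:ℝ)⁻¹ * v n i)]
      have hBle : ‖B‖ ≤ (L:ℝ)⁻¹ * ‖v n - w n‖ := by
        have : (L:ℝ)⁻¹ * ‖v n - w n‖ = ‖(L:ℝ)⁻¹ • (v n - w n)‖ := by
          rw [norm_smul]
          simp [abs_of_nonneg hLinv0]
        rw [this]
        apply norm_le_of_abs_le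
        intro i
        have h3 := hcy n hn (by omega) i
        simp only [Set.mem_Icc] at h3
        simp only [hB, PiLp.smul_apply, PiLp.sub_apply, smul_eq_mul, abs_mul, PiLp.toLp_apply,
          abs_of_nonneg hLinv0]
        have : |1 - y n i| ≤ 1 := by rw [abs_le]; constructor <;> nlinarith
        nlinarith [mul_nonneg hLinv0 (mul_nonneg (abs_nonneg (v n i - w n i))
          (by linarith : (0:ℝ) ≤ 1 - |1 - y n i|))]
      have hstep : ‖x (n+1) - y (n+1)‖ ≤ ‖x n - y n‖ + (L:ℝ)⁻¹ * ‖v n - w n‖ := by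
        rw [hdecomp]
        calc ‖A + B‖ ≤ ‖A‖ + ‖B‖ := norm_add_le _ _
          _ ≤ _ := add_le_add hAle hBle
      -- sum manipulation
      obtain ⟨m, rfl⟩ : ∃ m, n = m + 1 := ⟨n - 1, by omega⟩
      have hsum : ∑ τ ∈ Finset.Icc 1 (m + 1), ‖v τ - w τ‖ =
          (∑ τ ∈ Finset.Icc 1 m, ‖v τ - w τ‖) + ‖v (m+1) - w (m+1)‖ :=
        Finset.sum_Icc_succ_top (by omega) _
      have hkey : (m + 1 + 1) - 1 = m + 1 := rfl
      rw [hkey, hsum, mul_add]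
      have hIH' : ‖x (m+1) - y (m+1)‖ ≤
          (2 / (L:ℝ)) * ∑ τ ∈ Finset.Icc 1 m, ‖v τ - w τ‖ := by
        have : (m + 1) - 1 = m := rfl
        rw [this] at IH; exact IH
      have hnn : (0:ℝ) ≤ ‖v (m+1) - w (m+1)‖ := norm_nonneg _
      have h2L : (L:ℝ)⁻¹ * ‖v (m+1) - w (m+1)‖ ≤
          (2 / (L:ℝ)) * ‖v (m+1) - w (m+1)‖ := by
        rw [div_eq_mul_inv]; nlinarith
      linarith
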